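/- arXiv:2010.09560 — 2 statements merged into one kernel-verified Lean document; each statement's English description precedes it below -/
import Mathlib

section
/- Let α be a positive real number such that G_α is a free group of rank 2 with free basis {A, B_α}. Then every element of G_α that stabilizes the set {0, ∞} setwise is the identity. -/
open Matrix OnePoint

noncomputable abbrev SL2 := Matrix.SpecialLinearGroup (Fin 2) ℝ

noncomputable def mobius (g : SL2) : OnePoint ℝ → OnePoint ℝ :=
  fun p => Option.elim p
    (if g.1 1 0 = 0 then ∞ else ((g.1 0 0 / g.1 1 0 : ℝ) : OnePoint ℝ))
    (fun x => if g.1 1 0 * x + g.1 1 1 = 0 then ∞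
      else (((g.1 0 0 * x + g.1 0 1) / (g.1 1 0 * x + g.1 1 1) : ℝ) : OnePoint ℝ))

noncomputable def matA : SL2 := ⟨!![1,1;0,1], by norm_num [Matrix.det_fin_two_of]⟩
noncomputable def matB (α : ℝ) : SL2 := ⟨!![1,0;α,1], by norm_num [Matrix.det_fin_two_of]⟩


section FreeGroupAux
set_option linter.unusedSectionVars false


open FreeGroup List

variable {α : Type*} [DecidableEq α]

local notation "Lt" => List (α × Bool)

def NRed (x y : α × Bool) : Prop := ¬(x.1 = y.1 ∧ x.2 = !y.2)

theorem reduce_eq_self_iff_chain : ∀ L : List (α × Bool),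
    FreeGroup.reduce L = L ↔ List.Chain' NRed L := by
  intro L
  induction L with
  | nil => simp; exact List.isChain_nil
  | cons x L ih =>
    constructor
    · intro h
      rw [FreeGroup.reduce.cons] at h
      cases hR : FreeGroup.reduce L with
      | nil =>
        rw [hR] at h
        simp at h
        subst h
        exact List.isChain_singleton _
      | cons hd tl =>
        rw [hR] at h
        by_cases hc : x.1 = hd.1 ∧ x.2 = !hd.2
        · simp only [if_pos hc] at h
          have h1 : tl.length = L.length + 1 := by
            have := congrArg List.length h; simpa using this
          have h2 : (FreeGroup.reduce L).length ≤ L.length :=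
            FreeGroup.Red.length_le (FreeGroup.reduce.red)
          rw [hR] at h2
          simp at h2
          omega
        · simp only [if_neg hc] at h
          have hL : L = hd :: tl := by
            have := h
            injection this with _ h2
            exact h2.symm
          have hLred : FreeGroup.reduce L = L := by rw [hR, hL]
          subst hL
          simp only [List.Chain']
          rw [List.isChain_cons_cons]
          exact ⟨hc, ih.mp hLred⟩
    · intro h
      cases L with
      | nil => simp [FreeGroup.reduce]
      | cons y M =>
        simp only [List.Chain'] at h
        rw [List.isChain_cons_cons] at h
        have hred : FreeGroup.reduce (y :: M) = y :: M := ih.mpr h.2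
        rw [FreeGroup.reduce.cons, hred]
        simp only
        rw [if_neg h.1]

theorem chain'_invRev {L : List (α × Bool)} (h : List.Chain' NRed L) :
    List.Chain' NRed (FreeGroup.invRev L) := by
  rw [← reduce_eq_self_iff_chain] at h ⊢
  rw [FreeGroup.reduce_invRev, h]

theorem head?_invRev (L : List (α × Bool)) :
    (FreeGroup.invRev L).head? = L.getLast?.map (fun p => (p.1, !p.2)) := by
  simp [FreeGroup.invRev, List.head?_reverse]

theorem getLast?_invRev (L : List (α × Bool)) :
    (FreeGroup.invRev L).getLast? = L.head?.map (fun p => (p.1, !p.2)) := by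
  simp [FreeGroup.invRev]

theorem commute_of_conj_commute {G : Type*} [Group G] {u x y : G}
    (hu : Commute u y) (h : Commute (u * x * u⁻¹) y) : Commute x y := by
  have h2 : Commute (u⁻¹ * (u * x * u⁻¹) * u) y :=
    (hu.inv_left.mul_left h).mul_left hu
  have h3 : u⁻¹ * (u * x * u⁻¹) * u = x := by group
  rwa [h3] at h2

theorem key_aux (a : α) : ∀ (n : ℕ) (w : FreeGroup α), w.toWord.length ≤ n →
    Commute (w * FreeGroup.of a * w⁻¹) (FreeGroup.of a) →
    ∃ k : ℤ, w = FreeGroup.of a ^ k := by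
  intro n
  induction n with
  | zero =>
    intro w hl _
    refine ⟨0, ?_⟩
    rw [zpow_zero, ← FreeGroup.toWord_eq_nil_iff]
    exact List.length_eq_zero_iff.mp (Nat.le_zero.mp hl)
  | succ n ih =>
    intro w hl hcomm
    have hred : FreeGroup.reduce w.toWord = w.toWord := FreeGroup.reduce_toWord w
    have hchain : List.Chain' NRed w.toWord := (reduce_eq_self_iff_chain _).mp hred
    cases hL : w.toWord with
    | nil =>
      exact ⟨0, by rw [zpow_zero, ← FreeGroup.toWord_eq_nil_iff, hL]⟩
    | cons x T =>
      obtain ⟨x1, s⟩ := x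
      have hwmk : FreeGroup.mk ((x1, s) :: T) = w := by rw [← hL]; exact FreeGroup.mk_toWord
      by_cases hx1 : x1 = a
      · -- strip a front letter a^±1
        rw [hx1] at hL hwmk
        set w' : FreeGroup α := FreeGroup.mk T with hw'def
        have hT : w'.toWord = T := by
          rw [hw'def, FreeGroup.toWord_mk]
          apply (reduce_eq_self_iff_chain _).mpr
          have := hchain
          rw [hL] at this
          exact this.tail
        have hTlen : w'.toWord.length ≤ n := by
          rw [hT]
          have := hl
          rw [hL] at this
          simpa using this
        -- w = u * w' with u = (of a) or (of a)⁻¹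
        have hsplit : w = (cond s (FreeGroup.of a) (FreeGroup.of a)⁻¹) * w' := by
          rw [← hwmk, hw'def]
          cases s
          · have : (FreeGroup.of a)⁻¹ = FreeGroup.mk [(a, false)] := by
              rw [show FreeGroup.of a = FreeGroup.mk [(a, true)] from rfl, FreeGroup.inv_mk]
              rfl
            rw [cond_false, this, FreeGroup.mul_mk]
            rfl
          · rw [cond_true, show FreeGroup.of a = FreeGroup.mk [(a, true)] from rfl,
              FreeGroup.mul_mk]
            rfl
        set u : FreeGroup α := cond s (FreeGroup.of a) (FreeGroup.of a)⁻¹ with hudef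
        have hu : Commute u (FreeGroup.of a) := by
          cases s
          · exact (Commute.refl _).inv_left
          · exact Commute.refl _
        have heq : w * FreeGroup.of a * w⁻¹ =
            u * (w' * FreeGroup.of a * w'⁻¹) * u⁻¹ := by rw [hsplit]; group
        rw [heq] at hcomm
        obtain ⟨k, hk⟩ := ih w' hTlen (commute_of_conj_commute hu hcomm)
        refine ⟨if s then k + 1 else k - 1, ?_⟩
        rw [hsplit, hk, hudef]
        cases s <;> simp <;> group
      · -- head letter is not a; look at the last letter
        have hne : w.toWord ≠ [] := by rw [hL]; simp
        rcases hgl : w.toWord.getLast hne with ⟨y1, t⟩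
        by_cases hy1 : y1 = a
        · -- strip a last letter a^±1
          rw [hy1] at hgl
          have hsplitL : w.toWord.dropLast ++ [(a, t)] = w.toWord := by
            rw [← hgl]; exact List.dropLast_append_getLast hne
          set w' : FreeGroup α := FreeGroup.mk w.toWord.dropLast with hw'def
          have hT : w'.toWord = w.toWord.dropLast := by
            rw [hw'def, FreeGroup.toWord_mk]
            exact (reduce_eq_self_iff_chain _).mpr
              (hchain.prefix (List.dropLast_prefix _))
          have hTlen : w'.toWord.length ≤ n := by
            rw [hT]
            have h1 := congrArg List.length hsplitL
            rw [List.length_append] at h1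
            simp only [List.length_singleton] at h1
            omega
          have hsplit : w = w' * (cond t (FreeGroup.of a) (FreeGroup.of a)⁻¹) := by
            conv_lhs => rw [← FreeGroup.mk_toWord (x := w), ← hsplitL]
            rw [hw'def, ← FreeGroup.mul_mk]
            cases t
            · have : (FreeGroup.of a)⁻¹ = FreeGroup.mk [(a, false)] := by
                rw [show FreeGroup.of a = FreeGroup.mk [(a, true)] from rfl, FreeGroup.inv_mk]
                rfl
              rw [cond_false, this]
            · rw [cond_true, show FreeGroup.of a = FreeGroup.mk [(a, true)] from rfl]
          have heq : w * FreeGroup.of a * w⁻¹ = w' * FreeGroup.of a * w'⁻¹ := by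
            rw [hsplit]; cases t
            · rw [cond_false]; group
            · rw [cond_true]; group
          rw [heq] at hcomm
          obtain ⟨k, hk⟩ := ih w' hTlen hcomm
          refine ⟨if t then k + 1 else k - 1, ?_⟩
          rw [hsplit, hk]
          cases t <;> simp <;> group
        · -- contradiction: first and last letters are not a
          exfalso
          set L : List (α × Bool) := w.toWord with hLdef
          set N : List (α × Bool) := L ++ ([(a, true)] ++ FreeGroup.invRev L) with hNdef
          have hheadL : L.head? = Option.some (x1, s) := by rw [hL]; rfl
          have hlastL : L.getLast? = Option.some (y1, t) := by
            rw [List.getLast?_eq_getLast hne, hgl]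
          have hchainInv : List.Chain' NRed (FreeGroup.invRev L) := chain'_invRev hchain
          have hheadInv : (FreeGroup.invRev L).head? = Option.some (y1, !t) := by
            rw [head?_invRev, hlastL]; rfl
          have hlastInv : (FreeGroup.invRev L).getLast? = Option.some (x1, !s) := by
            rw [getLast?_invRev, hheadL]; rfl
          have hchainN : List.Chain' NRed N := by
            rw [hNdef]
            simp only [List.Chain']
            rw [List.isChain_append]
            refine ⟨hchain, ?_, ?_⟩
            · rw [List.isChain_append]
              refine ⟨List.isChain_singleton _, hchainInv, ?_⟩
              intro p hp q hq
              simp only [List.getLast?_singleton, Option.mem_def, Option.some_inj] at hp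
              rw [hheadInv] at hq
              simp only [Option.mem_def, Option.some_inj] at hq
              rw [← hp, ← hq]
              intro hcon
              exact hy1 hcon.1.symm
            · intro p hp q hq
              rw [hlastL] at hp
              simp only [Option.mem_def, Option.some_inj] at hp
              simp only [List.singleton_append, List.head?_cons, Option.mem_def,
                Option.some_inj] at hq
              rw [← hp, ← hq]
              intro hcon
              exact hy1 hcon.1
          have hchainM1 : List.Chain' NRed (N ++ [(a, true)]) := by
            simp only [List.Chain']
            rw [List.isChain_append]
            refine ⟨hchainN, List.isChain_singleton _, ?_⟩
            intro p hp q hq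
            have hlastN : N.getLast? = Option.some (x1, !s) := by
              rw [hNdef]
              rw [List.getLast?_append]
              rw [List.getLast?_append]
              rw [hlastInv]
              rfl
            rw [hlastN] at hp
            simp only [Option.mem_def, Option.some_inj] at hp
            simp only [List.head?_cons, Option.mem_def, Option.some_inj] at hq
            rw [← hp, ← hq]
            intro hcon
            exact hx1 hcon.1
          have hchainM2 : List.Chain' NRed ((a, true) :: N) := by
            simp only [List.Chain']
            rw [List.isChain_cons]
            refine ⟨?_, hchainN⟩
            intro q hq
            have hheadN : N.head? = Option.some (x1, s) := by
              rw [hNdef, List.head?_append, hheadL]; rfl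
            rw [hheadN] at hq
            simp only [Option.mem_def, Option.some_inj] at hq
            rw [← hq]
            intro hcon
            exact hx1 hcon.1.symm
          -- derive list equality from the commutation relation
          have hofmk : FreeGroup.of a = FreeGroup.mk [(a, true)] := rfl
          have hwmk' : w = FreeGroup.mk L := (FreeGroup.mk_toWord).symm
          have hmkeq : FreeGroup.mk (N ++ [(a, true)]) = FreeGroup.mk ((a, true) :: N) := by
            have := hcomm
            unfold Commute SemiconjBy at this
            rw [hofmk, hwmk'] at this
            simp only [FreeGroup.inv_mk, FreeGroup.mul_mk] at this
            calc FreeGroup.mk (N ++ [(a, true)])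
                = FreeGroup.mk (L ++ [(a, true)] ++ FreeGroup.invRev L ++ [(a, true)]) := by
                  rw [hNdef]; simp [List.append_assoc]
              _ = FreeGroup.mk ([(a, true)] ++ (L ++ [(a, true)] ++ FreeGroup.invRev L)) := this
              _ = FreeGroup.mk ((a, true) :: N) := by
                  rw [hNdef]; simp [List.append_assoc]
          have hlisteq : N ++ [(a, true)] = (a, true) :: N := by
            have h1 := FreeGroup.reduce.sound hmkeq
            rwa [(reduce_eq_self_iff_chain _).mpr hchainM1,
              (reduce_eq_self_iff_chain _).mpr hchainM2] at h1
          have hheadM1 : (N ++ [(a, true)]).head? = Option.some (x1, s) := by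
            rw [List.head?_append]
            have hheadN : N.head? = Option.some (x1, s) := by
              rw [hNdef, List.head?_append, hheadL]; rfl
            rw [hheadN]
            rfl
          rw [hlisteq] at hheadM1
          simp only [List.head?_cons, Option.some_inj] at hheadM1
          exact hx1 (congrArg Prod.fst hheadM1).symm

end FreeGroupAux

theorem matA_inv : matA⁻¹ = (⟨!![1,-1;0,1], by norm_num [Matrix.det_fin_two_of]⟩ : SL2) := by
  apply inv_eq_of_mul_eq_one_right
  apply Subtype.ext
  show (matA.1 * _) = (1 : SL2).1
  rw [matA]
  norm_num [Matrix.mul_fin_two, Matrix.SpecialLinearGroup.coe_one]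
  exact (Matrix.eta_fin_two 1).symm

theorem matA_zpow : ∀ k : ℤ, ((matA ^ k : SL2) : Matrix (Fin 2) (Fin 2) ℝ) = !![1,(k:ℝ);0,1] := by
  intro k
  induction k using Int.induction_on with
  | zero => simp [Matrix.SpecialLinearGroup.coe_one]; exact Matrix.eta_fin_two 1
  | succ n ihn =>
    rw [_root_.zpow_add_one, Matrix.SpecialLinearGroup.coe_mul, ihn]
    rw [show ((((n:ℤ)+1) : ℤ) : ℝ) = (n:ℝ)+1 by push_cast; ring]
    rw [matA]
    norm_num [Matrix.mul_fin_two]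
    ring_nf
  | pred n ihn =>
    rw [sub_eq_add_neg, _root_.zpow_add, Matrix.SpecialLinearGroup.coe_mul, ihn,
      _root_.zpow_neg_one, matA_inv]
    rw [show (((-(n:ℤ)+ -1) : ℤ) : ℝ) = (-(n:ℝ))+ -1 by push_cast; ring]
    norm_num [Matrix.mul_fin_two]
    ring_nf

theorem stmt4 (α : ℝ) (hα : 0 < α)
    (hfree : Function.Injective
      (FreeGroup.lift (fun b : Bool => if b then matA else matB α))) :
    ∀ g ∈ Subgroup.closure ({matA, matB α} : Set SL2),
      mobius g '' {((0:ℝ) : OnePoint ℝ), ∞} = {((0:ℝ) : OnePoint ℝ), ∞} → g = 1 := by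
  intro g hg himg
  set f : Bool → SL2 := fun b : Bool => if b then matA else matB α with hfdef
  -- obtain a word representing g
  have hrange : Set.range f = ({matA, matB α} : Set SL2) := by
    ext x
    constructor
    · rintro ⟨bb, rfl⟩
      cases bb
      · right; rfl
      · left; rfl
    · rintro (rfl | rfl)
      · exact ⟨true, rfl⟩
      · exact ⟨false, rfl⟩
  obtain ⟨w, hwg⟩ : ∃ w, FreeGroup.lift f w = g := by
    have : g ∈ (FreeGroup.lift f).range := by
      rw [FreeGroup.range_lift_eq_closure, hrange]; exact hg
    exact this
  have hfA : FreeGroup.lift f (FreeGroup.of true) = matA := by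
    rw [FreeGroup.lift_apply_of]; simp [hfdef]
  -- entries
  set a := g.1 0 0 with hadef
  set b := g.1 0 1 with hbdef
  set c := g.1 1 0 with hcdef
  set d := g.1 1 1 with hddef
  have hdet : a * d - b * c = 1 := by
    have h2 := g.2
    rw [Matrix.det_fin_two] at h2
    exact h2
  have hgmat : g.1 = !![a, b; c, d] := Matrix.eta_fin_two g.1
  have hm0 : mobius g ((0:ℝ) : OnePoint ℝ) =
      (if d = 0 then ∞ else ((b / d : ℝ) : OnePoint ℝ)) := by
    show (if c * 0 + d = 0 then ∞
      else (((a * 0 + b) / (c * 0 + d) : ℝ) : OnePoint ℝ)) = _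
    norm_num
  have hminf : mobius g ∞ =
      (if c = 0 then ∞ else ((a / c : ℝ) : OnePoint ℝ)) := rfl
  -- dichotomy
  have h0mem : mobius g ((0:ℝ) : OnePoint ℝ) ∈ ({((0:ℝ) : OnePoint ℝ), ∞} : Set (OnePoint ℝ)) := by
    rw [← himg]; exact Set.mem_image_of_mem _ (by simp)
  have hsurjinf : ∃ p ∈ ({((0:ℝ) : OnePoint ℝ), ∞} : Set (OnePoint ℝ)), mobius g p = ∞ := by
    have : (∞ : OnePoint ℝ) ∈ mobius g '' {((0:ℝ) : OnePoint ℝ), ∞} := by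
      rw [himg]; simp
    exact this
  have hsurj0 : ∃ p ∈ ({((0:ℝ) : OnePoint ℝ), ∞} : Set (OnePoint ℝ)),
      mobius g p = ((0:ℝ) : OnePoint ℝ) := by
    have : ((0:ℝ) : OnePoint ℝ) ∈ mobius g '' {((0:ℝ) : OnePoint ℝ), ∞} := by
      rw [himg]; simp
    exact this
  have hpair : (mobius g ((0:ℝ) : OnePoint ℝ) = ((0:ℝ) : OnePoint ℝ) ∧ mobius g ∞ = ∞) ∨
      (mobius g ((0:ℝ) : OnePoint ℝ) = ∞ ∧ mobius g ∞ = ((0:ℝ) : OnePoint ℝ)) := by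
    rcases h0mem with h0 | h0
    · left
      refine ⟨h0, ?_⟩
      obtain ⟨p, hp, hpe⟩ := hsurjinf
      rcases hp with rfl | rfl
      · rw [h0] at hpe
        exact absurd hpe (OnePoint.coe_ne_infty _)
      · exact hpe
    · right
      refine ⟨h0, ?_⟩
      obtain ⟨p, hp, hpe⟩ := hsurj0
      rcases hp with rfl | rfl
      · rw [h0] at hpe
        exact absurd hpe.symm (OnePoint.coe_ne_infty _)
      · exact hpe
  have hmatAcoe : (matA : Matrix (Fin 2) (Fin 2) ℝ) = !![1,1;0,1] := rfl
  rcases hpair with ⟨h0, hinf⟩ | ⟨h0, hinf⟩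
  · -- g fixes 0 and ∞ : c = 0, b = 0
    rw [hminf] at hinf
    have hc : c = 0 := by
      by_contra hc
      rw [if_neg hc] at hinf
      exact OnePoint.coe_ne_infty _ hinf
    rw [hm0] at h0
    have hd : d ≠ 0 := by
      intro hd
      rw [if_pos hd] at h0
      exact OnePoint.infty_ne_coe _ h0
    rw [if_neg hd] at h0
    have hb : b = 0 := by
      have := OnePoint.coe_injective h0
      exact (div_eq_zero_iff.mp this).resolve_right hd
    have had : a * d = 1 := by rw [hb, hc] at hdet; simpa using hdet
    have hginv : ((g⁻¹ : SL2) : Matrix (Fin 2) (Fin 2) ℝ) = !![d, -b; -c, a] := by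
      rw [Matrix.SpecialLinearGroup.SL2_inv_expl g]
      rfl
    have h1 : g * matA * g⁻¹ =
        (⟨!![1, a * a; 0, 1], by norm_num [Matrix.det_fin_two_of]⟩ : SL2) := by
      apply Subtype.ext
      simp only [Matrix.SpecialLinearGroup.coe_mul]
      rw [hgmat, hginv, hmatAcoe, hb, hc]
      norm_num [Matrix.mul_fin_two]
      rw [had, mul_comm d a, had]
      exact ⟨rfl, rfl⟩
    have hGA : (g * matA * g⁻¹) * matA = matA * (g * matA * g⁻¹) := by
      rw [h1]
      apply Subtype.ext
      erw [Matrix.SpecialLinearGroup.coe_mul, Matrix.SpecialLinearGroup.coe_mul]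
      rw [hmatAcoe]
      norm_num [Matrix.mul_fin_two]
      ring_nf
    have hrel : (w * FreeGroup.of true * w⁻¹) * FreeGroup.of true =
        FreeGroup.of true * (w * FreeGroup.of true * w⁻¹) := by
      apply hfree
      simp only [_root_.map_mul, _root_.map_inv, hwg, hfA]
      exact hGA
    obtain ⟨k, hk⟩ := key_aux true w.toWord.length w le_rfl hrel
    have hgk : g = matA ^ k := by
      rw [← hwg, hk, map_zpow, hfA]
    have hkent : ((matA ^ k : SL2) : Matrix (Fin 2) (Fin 2) ℝ) 0 1 = (k : ℝ) := by
      rw [matA_zpow]; simp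
    have hk0 : (k : ℝ) = 0 := by
      rw [← hkent, ← hgk, ← hbdef, hb]
    have : k = 0 := by exact_mod_cast hk0
    rw [hgk, this, zpow_zero]
  · -- g swaps 0 and ∞ : a = 0, d = 0
    rw [hm0] at h0
    have hd : d = 0 := by
      by_contra hd
      rw [if_neg hd] at h0
      exact OnePoint.coe_ne_infty _ h0
    rw [hminf] at hinf
    have hc : c ≠ 0 := by
      intro hc
      rw [if_pos hc] at hinf
      exact OnePoint.infty_ne_coe _ hinf
    rw [if_neg hc] at hinf
    have ha : a = 0 := by
      have := OnePoint.coe_injective hinf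
      exact (div_eq_zero_iff.mp this).resolve_right hc
    have hbc : b * c = -1 := by rw [ha, hd] at hdet; linarith [hdet]
    have hg2 : g * g = (⟨!![-1, 0; 0, -1], by norm_num [Matrix.det_fin_two_of]⟩ : SL2) := by
      apply Subtype.ext
      simp only [Matrix.SpecialLinearGroup.coe_mul]
      rw [hgmat, ha, hd]
      norm_num [Matrix.mul_fin_two]
      rw [hbc, mul_comm c b, hbc]
      exact ⟨rfl, rfl⟩
    have hg2inv : (((g * g)⁻¹ : SL2) : Matrix (Fin 2) (Fin 2) ℝ) = !![-1, 0; 0, -1] := by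
      rw [Matrix.SpecialLinearGroup.SL2_inv_expl (g * g)]
      show !![(g*g).1 1 1, -(g*g).1 0 1; -(g*g).1 1 0, (g*g).1 0 0] = _
      rw [hg2]
      norm_num
    have hGA : ((g * g) * matA * (g * g)⁻¹) * matA = matA * ((g * g) * matA * (g * g)⁻¹) := by
      apply Subtype.ext
      simp only [Matrix.SpecialLinearGroup.coe_mul]
      rw [hg2inv, hmatAcoe]
      have hcc : ((g : Matrix (Fin 2) (Fin 2) ℝ) * (g : Matrix (Fin 2) (Fin 2) ℝ)) = !![-1, 0; 0, -1] := by
        rw [← Matrix.SpecialLinearGroup.coe_mul]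
        exact congrArg Subtype.val hg2
      rw [hcc]
      norm_num [Matrix.mul_fin_two]
    have hrel : ((w * w) * FreeGroup.of true * (w * w)⁻¹) * FreeGroup.of true =
        FreeGroup.of true * ((w * w) * FreeGroup.of true * (w * w)⁻¹) := by
      apply hfree
      simp only [_root_.map_mul, _root_.map_inv, hwg, hfA]
      exact hGA
    obtain ⟨k, hk⟩ := key_aux true (w * w).toWord.length (w * w) le_rfl hrel
    exfalso
    have hgk : g * g = matA ^ k := by
      rw [← hwg, ← _root_.map_mul, hk, map_zpow, hfA]
    have hkent : ((matA ^ k : SL2) : Matrix (Fin 2) (Fin 2) ℝ) 0 0 = 1 := by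
      rw [matA_zpow]; simp
    rw [← hgk] at hkent
    rw [hg2] at hkent
    norm_num at hkent
end

section
/- For each n ≥ 1, the map c_n : ℝ → ℝ ∪ {∞} defined by c_n(α) = (B_α A^{-1})^n(0) (Möbius action, equal to u_n(α)/l_n(α)) satisfies the recursion c_{n+1}(α) = 1/(α + 1/(c_n(α) - 1)), with c₁(α) = 1/(α-1), and is a clockwise map on S¹ ≅ ℝ ∪ {∞}. -/
open Matrix OnePoint

def IncAt (I : Set ℝ) (f : ℝ → OnePoint ℝ) (a : ℝ) : Prop :=
  ∃ ε > 0, Set.Ioo (a - ε) (a + ε) ⊆ I ∧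
    ∀ x ∈ Set.Ioo (a - ε) (a + ε), ∀ y ∈ Set.Ioo (a - ε) (a + ε), x < y →
      ∃ rx ry : ℝ, f x = (rx : OnePoint ℝ) ∧ f y = (ry : OnePoint ℝ) ∧ rx < ry

def DecAt (I : Set ℝ) (f : ℝ → OnePoint ℝ) (a : ℝ) : Prop :=
  ∃ ε > 0, Set.Ioo (a - ε) (a + ε) ⊆ I ∧
    ∀ x ∈ Set.Ioo (a - ε) (a + ε), ∀ y ∈ Set.Ioo (a - ε) (a + ε), x < y →
      ∃ rx ry : ℝ, f x = (rx : OnePoint ℝ) ∧ f y = (ry : OnePoint ℝ) ∧ ry < rx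

noncomputable def negInv (p : OnePoint ℝ) : OnePoint ℝ :=
  Option.elim p (((0 : ℝ) : OnePoint ℝ))
    (fun x => if x = 0 then ∞ else ((-1 / x : ℝ) : OnePoint ℝ))

def AnticlockwiseAt (I : Set ℝ) (f : ℝ → OnePoint ℝ) (a : ℝ) : Prop :=
  IncAt I f a ∨ IncAt I (fun x => negInv (f x)) a

def ClockwiseAt (I : Set ℝ) (f : ℝ → OnePoint ℝ) (a : ℝ) : Prop :=
  DecAt I f a ∨ DecAt I (fun x => negInv (f x)) a

noncomputable def addPt (p : OnePoint ℝ) (c : ℝ) : OnePoint ℝ :=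
  Option.elim p ∞ (fun r => ((r + c : ℝ) : OnePoint ℝ))

noncomputable def oinv (p : OnePoint ℝ) : OnePoint ℝ :=
  Option.elim p (((0 : ℝ) : OnePoint ℝ))
    (fun x => if x = 0 then ∞ else ((1 / x : ℝ) : OnePoint ℝ))

noncomputable def cmap (n : ℕ) (α : ℝ) : OnePoint ℝ :=
  mobius ((matB α * matA⁻¹) ^ n) ((0 : ℝ) : OnePoint ℝ)

noncomputable def matM (α : ℝ) : SL2 := ⟨!![1,-1;α,1-α], by norm_num [Matrix.det_fin_two_of]⟩

lemma matM_eq (α : ℝ) : matB α * matA⁻¹ = matM α := by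
  rw [eq_comm, eq_mul_inv_iff_mul_eq]
  ext i j
  change ((matM α).1 * matA.1) i j = (matB α).1 i j
  simp only [Matrix.SpecialLinearGroup.coe_mul, matM, matA, matB, Matrix.mul_fin_two]
  fin_cases i <;> fin_cases j <;> simp <;> ring

noncomputable def ulp : ℕ → ℝ → ℝ × ℝ
  | 0, _ => (0, 1)
  | n+1, α => ((ulp n α).1 - (ulp n α).2, α * (ulp n α).1 + (1-α) * (ulp n α).2)

noncomputable def dulp : ℕ → ℝ → ℝ × ℝ
  | 0, _ => (0, 0)
  | n+1, α => ((dulp n α).1 - (dulp n α).2,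
      (ulp n α).1 + α * (dulp n α).1 - (ulp n α).2 + (1-α) * (dulp n α).2)

lemma entries (n : ℕ) (α : ℝ) :
    ((matM α ^ n).1 0 1 = (ulp n α).1) ∧ ((matM α ^ n).1 1 1 = (ulp n α).2) := by
  induction n with
  | zero => simp [ulp]
  | succ n ih =>
    rw [pow_succ']
    simp only [Matrix.SpecialLinearGroup.coe_mul, ulp, ← ih.1, ← ih.2]
    constructor <;>
      rw [Matrix.mul_apply, Fin.sum_univ_two] <;>
      simp [matM, ← Matrix.SpecialLinearGroup.coe_pow] <;> ring

lemma hasDeriv (n : ℕ) (α : ℝ) :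
    HasDerivAt (fun x => (ulp n x).1) (dulp n α).1 α ∧
    HasDerivAt (fun x => (ulp n x).2) (dulp n α).2 α := by
  induction n with
  | zero => simp [ulp, dulp]; exact ⟨hasDerivAt_const _ _, hasDerivAt_const _ _⟩
  | succ n ih =>
    simp only [ulp, dulp]
    refine ⟨(ih.1.sub ih.2), ?_⟩
    have h1 : HasDerivAt (fun x : ℝ => x * (ulp n x).1)
        ((ulp n α).1 + α * (dulp n α).1) α := by
      simpa [mul_comm] using (hasDerivAt_id α).fun_mul ih.1
    have h2 : HasDerivAt (fun x : ℝ => (1-x) * (ulp n x).2)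
        (-(ulp n α).2 + (1-α) * (dulp n α).2) α := by
      simpa using ((hasDerivAt_const α (1:ℝ)).sub (hasDerivAt_id α)).fun_mul ih.2
    have := h1.fun_add h2
    refine this.congr_deriv ?_
    ring

lemma wronskian (n : ℕ) (hn : 1 ≤ n) (α : ℝ) :
    (dulp n α).1 * (ulp n α).2 - (ulp n α).1 * (dulp n α).2 ≤ -1 := by
  induction n with
  | zero => omega
  | succ n ih =>
    rcases Nat.eq_or_lt_of_le hn with h | h
    · have h0 : n = 0 := by omega
      subst h0
      norm_num [ulp, dulp]
    · have hn' : 1 ≤ n := by omega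
      have := ih hn'
      simp only [ulp, dulp]
      nlinarith [sq_nonneg ((ulp n α).1 - (ulp n α).2)]

lemma notboth (n : ℕ) (α : ℝ) (h : (ulp n α).2 = 0) : (ulp n α).1 ≠ 0 := by
  intro h1
  have hd := (matM α ^ n).2
  rw [Matrix.det_fin_two] at hd
  rw [(entries n α).1, (entries n α).2, h, h1] at hd
  simp at hd

lemma cmap_eq (n : ℕ) (α : ℝ) :
    cmap n α =
      if (ulp n α).2 = 0 then ∞ else (((ulp n α).1 / (ulp n α).2 : ℝ) : OnePoint ℝ) := by
  unfold cmap
  rw [matM_eq]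
  show (if (matM α ^ n).1 1 0 * 0 + (matM α ^ n).1 1 1 = 0 then _ else _) = _
  rw [mul_zero, zero_add, (entries n α).2]
  split_ifs with h
  · rfl
  · rw [show (matM α ^ n).1 0 0 * 0 + (matM α ^ n).1 0 1 = (ulp n α).1 by
      rw [mul_zero, zero_add, (entries n α).1]]




lemma oinv_coe (r : ℝ) : oinv (r : OnePoint ℝ) = if r = 0 then ∞ else ((1/r : ℝ) : OnePoint ℝ) := rfl
lemma oinv_infty : oinv ∞ = (((0:ℝ) : OnePoint ℝ)) := rfl
lemma addPt_coe (r c : ℝ) : addPt ((r : ℝ) : OnePoint ℝ) c = ((r + c : ℝ) : OnePoint ℝ) := rfl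
lemma addPt_infty (c : ℝ) : addPt ∞ c = ∞ := rfl

lemma part1 (α : ℝ) : cmap 1 α = oinv (((α - 1 : ℝ) : OnePoint ℝ)) := by
  rw [cmap_eq, oinv_coe]
  have h1 : ulp 1 α = (-1, 1-α) := by simp [ulp]
  rw [h1]
  rcases eq_or_ne α 1 with h | h
  · rw [if_pos (by rw [h]; ring), if_pos (by rw [h]; ring)]
  · have h2 : (1:ℝ) - α ≠ 0 := fun hc => h (by linarith)
    have h3 : α - 1 ≠ 0 := fun hc => h (by linarith)
    rw [if_neg h2, if_neg h3]
    norm_num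
    rw [inv_eq_one_div, div_eq_div_iff h2 h3]; ring

lemma part2 (n : ℕ) (α : ℝ) :
    cmap (n + 1) α = oinv (addPt (oinv (addPt (cmap n α) (-1))) α) := by
  rw [cmap_eq, cmap_eq]
  set u := (ulp n α).1 with hu
  set l := (ulp n α).2 with hl
  have hulp : ulp (n+1) α = (u - l, α * u + (1-α) * l) := rfl
  rw [hulp]
  dsimp only
  rcases eq_or_ne l 0 with h0 | h0
  · have hu0 : u ≠ 0 := notboth n α h0
    rw [if_pos h0, addPt_infty, oinv_infty, addPt_coe, oinv_coe]
    simp only [h0, zero_add]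
    rcases eq_or_ne α 0 with ha | ha
    · rw [if_pos (show α * u + (1-α) * 0 = 0 by rw [ha]; ring), if_pos ha]
    · rw [if_neg (show ¬(α * u + (1-α) * 0 = 0) by
          intro hc; exact (mul_ne_zero ha hu0) (by linear_combination hc)), if_neg ha]
      norm_num
      rw [inv_eq_one_div, div_eq_div_iff (mul_ne_zero ha hu0) ha]; ring
  · rw [if_neg h0, addPt_coe, oinv_coe]
    rcases eq_or_ne u l with he | he
    · rw [if_pos (show u/l + -1 = 0 by rw [he, div_self h0]; norm_num), addPt_infty, oinv_infty,
        if_neg (show ¬(α * u + (1-α) * l = 0) by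
          intro hc; rw [he] at hc; exact h0 (by linear_combination hc))]
      norm_num [he]
    · have hul : u - l ≠ 0 := sub_ne_zero.mpr he
      have h1 : u/l + -1 ≠ 0 := by
        intro hc
        exact he ((div_eq_one_iff_eq h0).mp (by linarith))
      rw [if_neg h1, addPt_coe, oinv_coe]
      have key : 1/(u/l + -1) + α = (α * u + (1-α) * l)/(u - l) := by
        have e1 : u/l + -1 = (u-l)/l := by field_simp; ring
        rw [e1, one_div_div, div_add' _ _ _ hul, div_eq_div_iff hul hul]
        ring
      rcases eq_or_ne (α * u + (1-α) * l) 0 with hd | hd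
      · rw [if_pos hd, if_pos (by rw [key, hd, zero_div])]
      · rw [if_neg hd, if_neg (by rw [key]; exact div_ne_zero hd hul)]
        rw [key, one_div_div]




lemma wneg (n : ℕ) (hn : 1 ≤ n) (x : ℝ) :
    (dulp n x).1 * (ulp n x).2 - (ulp n x).1 * (dulp n x).2 < 0 :=
  lt_of_le_of_lt (wronskian n hn x) (by norm_num)

lemma part3 (n : ℕ) (hn : 1 ≤ n) (a : ℝ) : ClockwiseAt Set.univ (cmap n) a := by
  rcases eq_or_ne ((ulp n a).2) 0 with h0 | h0
  · -- pole : use negInv branch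
    right
    have hu0 : (ulp n a).1 ≠ 0 := notboth n a h0
    have hc : ContinuousAt (fun x => (ulp n x).1) a :=
      (hasDeriv n a).1.differentiableAt.continuousAt
    have hev : ∀ᶠ x in nhds a, (ulp n x).1 ≠ 0 := hc.eventually_ne hu0
    rw [Metric.eventually_nhds_iff_ball] at hev
    obtain ⟨ε, hε, hball⟩ := hev
    simp only [Real.ball_eq_Ioo] at hball
    refine ⟨ε, hε, Set.subset_univ _, ?_⟩
    have hkey : ∀ x ∈ Set.Ioo (a - ε) (a + ε),
        negInv (cmap n x) = ((-(ulp n x).2 / (ulp n x).1 : ℝ) : OnePoint ℝ) := by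
      intro x hx
      have hu : (ulp n x).1 ≠ 0 := hball x hx
      rw [cmap_eq]
      rcases eq_or_ne ((ulp n x).2) 0 with h | h
      · rw [if_pos h]
        show (((0:ℝ) : OnePoint ℝ)) = _
        rw [h]; norm_num
      · rw [if_neg h]
        show (if (ulp n x).1 / (ulp n x).2 = 0 then ∞ else _) = _
        rw [if_neg (div_ne_zero hu h)]
        rw [neg_div, one_div_div, ← neg_div]
    have hanti : StrictAntiOn (fun x => -(ulp n x).2 / (ulp n x).1)
        (Set.Ioo (a - ε) (a + ε)) := by
      apply strictAntiOn_of_deriv_neg (convex_Ioo _ _)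
      · intro x hx
        exact (((hasDeriv n x).2.neg.div (hasDeriv n x).1
          (hball x hx)).differentiableAt.continuousAt).continuousWithinAt
      · intro x hx
        rw [interior_Ioo] at hx
        have hd := (hasDeriv n x).2.fun_neg.fun_div (hasDeriv n x).1 (hball x hx)
        rw [hd.deriv]
        apply div_neg_of_neg_of_pos
        · have hw := wneg n hn x
          nlinarith [hw]
        · exact pow_two_pos_of_ne_zero (hball x hx)
    intro x hx y hy hxy
    exact ⟨_, _, hkey x hx, hkey y hy, hanti hx hy hxy⟩
  · left
    have hc : ContinuousAt (fun x => (ulp n x).2) a :=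
      (hasDeriv n a).2.differentiableAt.continuousAt
    have hev : ∀ᶠ x in nhds a, (ulp n x).2 ≠ 0 := hc.eventually_ne h0
    rw [Metric.eventually_nhds_iff_ball] at hev
    obtain ⟨ε, hε, hball⟩ := hev
    simp only [Real.ball_eq_Ioo] at hball
    refine ⟨ε, hε, Set.subset_univ _, ?_⟩
    have hkey : ∀ x ∈ Set.Ioo (a - ε) (a + ε),
        cmap n x = (((ulp n x).1 / (ulp n x).2 : ℝ) : OnePoint ℝ) := by
      intro x hx
      rw [cmap_eq, if_neg (hball x hx)]
    have hanti : StrictAntiOn (fun x => (ulp n x).1 / (ulp n x).2)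
        (Set.Ioo (a - ε) (a + ε)) := by
      apply strictAntiOn_of_deriv_neg (convex_Ioo _ _)
      · intro x hx
        exact (((hasDeriv n x).1.div (hasDeriv n x).2
          (hball x hx)).differentiableAt.continuousAt).continuousWithinAt
      · intro x hx
        rw [interior_Ioo] at hx
        have hd := (hasDeriv n x).1.fun_div (hasDeriv n x).2 (hball x hx)
        rw [hd.deriv]
        apply div_neg_of_neg_of_pos
        · exact wneg n hn x
        · exact pow_two_pos_of_ne_zero (hball x hx)
    intro x hx y hy hxy
    exact ⟨_, _, hkey x hx, hkey y hy, hanti hx hy hxy⟩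


theorem stmt16 (n : ℕ) (hn : 1 ≤ n) :
    (∀ α : ℝ, cmap 1 α = oinv (((α - 1 : ℝ) : OnePoint ℝ))) ∧
    (∀ α : ℝ, cmap (n + 1) α = oinv (addPt (oinv (addPt (cmap n α) (-1))) α)) ∧
    (∀ a : ℝ, ClockwiseAt Set.univ (cmap n) a) :=
  ⟨part1, fun α => part2 n α, part3 n hn⟩
end
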